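/- For even m ≥ 6, the code C^[m] = C^(m) ∪ C^(m)(ρ) (where ρ = m/2 is the covering radius of C^(m)) is a binary linear code of length n = m(m−1)/2, dimension n − m + 2, minimum distance 3, and covering radius ⌊m/4⌋. -/

import Mathlib

open Finset

/-- Coordinate positions of `C^(m)`: the 2-element subsets of `{1,…,m}`. -/
abbrev Coords (m : ℕ) := {s : Finset (Fin m) // s.card = 2}

/-- The parity check matrix `H_m`, whose columns are all weight-2 vectors of length `m`. -/
def Hmat (m : ℕ) (i : Fin m) (c : Coords m) : ZMod 2 := if i ∈ c.1 then 1 else 0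

/-- The code `C^(m)`: the kernel of `H_m` over `F_2`. -/
noncomputable def Cm (m : ℕ) : Submodule (ZMod 2) (Coords m → ZMod 2) :=
  LinearMap.ker (Matrix.mulVecLin (Matrix.of fun i c => Hmat m i c))

/-- The distance from a vector `x` to a code `C`. -/
noncomputable def distToCode {ι : Type*} [Fintype ι]
    (C : Set (ι → ZMod 2)) (x : ι → ZMod 2) : ℕ :=
  sInf {d | ∃ c ∈ C, hammingDist x c = d}

/-- The covering radius of a code `C`. -/
noncomputable def covRad {ι : Type*} [Fintype ι] (C : Set (ι → ZMod 2)) : ℕ :=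
  sSup {d | ∃ x, distToCode C x = d}

/-- `C(i)`, the set of vectors at distance exactly `i` from `C`. -/
noncomputable def Cset {ι : Type*} [Fintype ι] (C : Set (ι → ZMod 2)) (i : ℕ) :
    Set (ι → ZMod 2) := {x | distToCode C x = i}

/-- The coset `x + C`. -/
def cosetOf {ι : Type*} (C : Set (ι → ZMod 2)) (x : ι → ZMod 2) : Set (ι → ZMod 2) :=
  (fun c => x + c) '' C

/-- The weight of the coset `x + C`: the minimum Hamming weight of its elements. -/
noncomputable def cosetWt {ι : Type*} [Fintype ι] (C : Set (ι → ZMod 2)) (x : ι → ZMod 2) : ℕ :=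
  sInf {w | ∃ v ∈ cosetOf C x, hammingNorm v = w}

/-- Complete regularity of a code `C` with covering radius `ρ` and
intersection numbers `b i`, `c i`. -/
noncomputable def compRegular {ι : Type*} [Fintype ι] (C : Set (ι → ZMod 2)) (ρ : ℕ)
    (b c : ℕ → ℕ) : Prop :=
  (∀ i, 1 ≤ i → i ≤ ρ → ∀ x ∈ Cset C i,
      Nat.card {y | hammingDist x y = 1 ∧ y ∈ Cset C (i - 1)} = c i) ∧
  (∀ i, i < ρ → ∀ x ∈ Cset C i,
      Nat.card {y | hammingDist x y = 1 ∧ y ∈ Cset C (i + 1)} = b i)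

/-- The action of a coordinate permutation on vectors. -/
def permAct {ι : Type*} (π : Equiv.Perm ι) (v : ι → ZMod 2) : ι → ZMod 2 := v ∘ π

/-- The automorphism group of a code, as a set of coordinate permutations. -/
def autSet {ι : Type*} (C : Set (ι → ZMod 2)) : Set (Equiv.Perm ι) :=
  {π | ∀ v, permAct π v ∈ C ↔ v ∈ C}

/-- Complete transitivity: any two cosets of the same weight are related by
an automorphism of the code. -/
noncomputable def compTrans {ι : Type*} [Fintype ι] (C : Set (ι → ZMod 2)) : Prop :=
  ∀ x x', distToCode C x = distToCode C x' →
    ∃ π ∈ autSet C, permAct π '' cosetOf C x = cosetOf C x'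

open scoped symmDiff

lemma hammingDist_eq_hammingNorm' {ι : Type*} [Fintype ι] {β : ι → Type*} [∀ i, AddGroup (β i)]
    [∀ i, DecidableEq (β i)] (x y : ∀ i, β i) : hammingDist x y = hammingNorm (x - y) := by
  simp_rw [hammingNorm, hammingDist, Pi.sub_apply, Ne, sub_eq_zero]

variable {m : ℕ}

def deg (x : Coords m → ZMod 2) (i : Fin m) : ZMod 2 :=
  ∑ c : Coords m, Hmat m i c * x c

lemma mem_Cm {x : Coords m → ZMod 2} : x ∈ Cm m ↔ ∀ i, deg x i = 0 := by
  simp [Cm, LinearMap.mem_ker, Matrix.mulVecLin_apply, Matrix.mulVec, dotProduct,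
    funext_iff, deg]

lemma zmod2_cases : ∀ a : ZMod 2, a = 0 ∨ a = 1 := by decide

lemma zmod2_ne_zero {a : ZMod 2} : a ≠ 0 ↔ a = 1 := by revert a; decide

def oddSet (x : Coords m → ZMod 2) : Finset (Fin m) := {i | deg x i = 1}

lemma mem_oddSet {x : Coords m → ZMod 2} {i : Fin m} : i ∈ oddSet x ↔ deg x i = 1 := by
  simp [oddSet]

lemma deg_add (x y : Coords m → ZMod 2) (i : Fin m) :
    deg (x + y) i = deg x i + deg y i := by
  simp [deg, mul_add, Finset.sum_add_distrib]

lemma deg_sub (x y : Coords m → ZMod 2) (i : Fin m) :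
    deg (x - y) i = deg x i - deg y i := by
  simp [deg, mul_sub, Finset.sum_sub_distrib]

lemma oddSet_add (x y : Coords m → ZMod 2) :
    oddSet (x + y) = oddSet x ∆ oddSet y := by
  ext i
  simp only [mem_oddSet, Finset.mem_symmDiff, mem_oddSet, deg_add]
  rcases zmod2_cases (deg x i) with h1 | h1 <;> rcases zmod2_cases (deg y i) with h2 | h2 <;>
    simp [h1, h2]

lemma oddSet_sub (x y : Coords m → ZMod 2) :
    oddSet (x - y) = oddSet x ∆ oddSet y := by
  ext i
  simp only [mem_oddSet, Finset.mem_symmDiff, deg_sub]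
  rcases zmod2_cases (deg x i) with h1 | h1 <;> rcases zmod2_cases (deg y i) with h2 | h2 <;>
    simp [h1, h2] <;> decide

lemma sum_Hmat_col (c : Coords m) : ∑ i, Hmat m i c = 0 := by
  have : ∑ i, Hmat m i c = (c.1.card : ZMod 2) := by
    rw [Finset.card_eq_sum_ones, Nat.cast_sum]
    rw [← Finset.sum_filter_add_sum_filter_not Finset.univ (fun i => i ∈ c.1)]
    have h1 : ∑ i ∈ Finset.univ.filter (fun i => i ∈ c.1), Hmat m i c
        = ∑ i ∈ c.1, (1 : ZMod 2) := by
      rw [Finset.filter_univ_mem]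
      exact Finset.sum_congr rfl fun i hi => by simp [Hmat, hi]
    have h2 : ∑ i ∈ Finset.univ.filter (fun i => ¬ i ∈ c.1), Hmat m i c = 0 :=
      Finset.sum_eq_zero fun i hi => by
        simp only [Finset.mem_filter] at hi; simp [Hmat, hi.2]
    rw [h1, h2, add_zero]; simp
  rw [this, c.2]; decide

lemma sum_deg (x : Coords m → ZMod 2) : ∑ i, deg x i = 0 := by
  unfold deg
  rw [Finset.sum_comm]
  exact Finset.sum_eq_zero fun c _ => by rw [← Finset.sum_mul, sum_Hmat_col, zero_mul]

lemma card_oddSet_even (x : Coords m → ZMod 2) : Even (oddSet x).card := by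
  have h : ((oddSet x).card : ZMod 2) = 0 := by
    have : ∑ i, deg x i = ((oddSet x).card : ZMod 2) := by
      rw [Finset.card_eq_sum_ones, Nat.cast_sum]
      rw [← Finset.sum_filter_add_sum_filter_not Finset.univ (fun i => deg x i = 1)]
      have h2 : ∑ i ∈ Finset.univ.filter (fun i => ¬ deg x i = 1), deg x i = 0 :=
        Finset.sum_eq_zero fun i hi => by
          simp only [Finset.mem_filter] at hi
          rcases zmod2_cases (deg x i) with h | h
          · exact h
          · exact absurd h hi.2
      have h1 : ∑ i ∈ Finset.univ.filter (fun i => deg x i = 1), deg x i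
          = ∑ i ∈ oddSet x, (1 : ZMod 2) := by
        refine Finset.sum_congr ?_ fun i hi => (Finset.mem_filter.mp hi).2
        rfl
      rw [h1, h2, add_zero]; simp
    rw [← this, sum_deg]
  have := (ZMod.natCast_eq_zero_iff _ 2).mp h
  exact (even_iff_two_dvd).mpr this

lemma card_oddSet_le (x : Coords m → ZMod 2) : (oddSet x).card ≤ 2 * hammingNorm x := by
  have hsub : oddSet x ⊆ ({c | x c ≠ 0} : Finset (Coords m)).biUnion (fun c => c.1) := by
    intro i hi
    rw [mem_oddSet] at hi
    by_contra hcon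
    simp only [Finset.mem_biUnion, Finset.mem_filter, Finset.mem_univ, true_and,
      not_exists, not_and] at hcon
    have : deg x i = 0 := Finset.sum_eq_zero fun c _ => by
      by_cases hc : x c = 0
      · rw [hc, mul_zero]
      · have := hcon c hc
        simp [Hmat, this]
    rw [this] at hi; exact absurd hi (by decide)
  calc (oddSet x).card ≤ _ := Finset.card_le_card hsub
    _ ≤ ∑ c ∈ ({c | x c ≠ 0} : Finset (Coords m)), c.1.card := Finset.card_biUnion_le
    _ = ∑ c ∈ ({c | x c ≠ 0} : Finset (Coords m)), 2 :=
        Finset.sum_congr rfl fun c _ => c.2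
    _ = 2 * hammingNorm x := by
      rw [Finset.sum_const, smul_eq_mul, mul_comm]; rfl

lemma deg_single (e : Coords m) (i : Fin m) :
    deg (Pi.single e (1 : ZMod 2)) i = Hmat m i e := by
  unfold deg
  rw [Finset.sum_eq_single e]
  · simp
  · intro c _ hc; simp [Pi.single_apply, hc]
  · intro h; exact absurd (Finset.mem_univ e) h

lemma oddSet_single (e : Coords m) : oddSet (Pi.single e (1 : ZMod 2)) = e.1 := by
  ext i
  rw [mem_oddSet, deg_single]
  by_cases h : i ∈ e.1 <;> simp [Hmat, h]

lemma exists_matching (T : Finset (Fin m)) (hT : Even T.card) :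
    ∃ y : Coords m → ZMod 2, oddSet y = T ∧ hammingNorm y = T.card / 2 ∧
      ∀ c : Coords m, y c ≠ 0 → c.1 ⊆ T := by
  generalize hn : T.card = n at hT
  induction n using Nat.strong_induction_on generalizing T with
  | _ n ih =>
  rcases Nat.eq_zero_or_pos n with h0 | hpos
  · subst h0
    have : T = ∅ := Finset.card_eq_zero.mp hn
    subst this
    refine ⟨0, ?_, ?_, ?_⟩
    · ext i; simp [mem_oddSet, deg]
    · simp [hammingNorm]
    · intro c hc; simp at hc
  · have h2 : 2 ≤ n := by
      rcases hT with ⟨k, hk⟩; omega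
    obtain ⟨i, hi⟩ := Finset.card_pos.mp (by omega : 0 < T.card)
    have hT' : 0 < (T.erase i).card := by
      rw [Finset.card_erase_of_mem hi]; omega
    obtain ⟨j, hj⟩ := Finset.card_pos.mp hT'
    have hij : j ≠ i := Finset.ne_of_mem_erase hj
    have hjT : j ∈ T := Finset.mem_of_mem_erase hj
    set e : Coords m := ⟨{i, j}, Finset.card_pair (Ne.symm hij)⟩ with he
    set T' : Finset (Fin m) := T \ {i, j} with hT'def
    have hsub : ({i, j} : Finset (Fin m)) ⊆ T := by
      intro a ha
      rcases Finset.mem_insert.mp ha with h | h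
      · exact h ▸ hi
      · exact (Finset.mem_singleton.mp h) ▸ hjT
    have hcardT' : T'.card = n - 2 := by
      rw [hT'def, Finset.card_sdiff_of_subset hsub, Finset.card_pair (Ne.symm hij), hn]
    obtain ⟨y', hodd', hnorm', hsupp'⟩ := ih (n - 2) (by omega) T' hcardT'
      (by rcases hT with ⟨k, hk⟩; exact ⟨k - 1, by omega⟩)
    set y : Coords m → ZMod 2 := y' + Pi.single e 1 with hy
    refine ⟨y, ?_, ?_, ?_⟩
    · rw [hy, oddSet_add, hodd', oddSet_single]
      have hdisj : Disjoint T' (e.1) := by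
        rw [hT'def]; exact Finset.sdiff_disjoint
      rw [Disjoint.symmDiff_eq_sup hdisj]
      rw [hT'def]
      exact Finset.sdiff_union_of_subset hsub
    · have hy'e : y' e = 0 := by
        by_contra hne
        have := hsupp' e hne
        have : i ∈ T' := this (Finset.mem_insert_self i {j})
        rw [hT'def, Finset.mem_sdiff] at this
        exact this.2 (Finset.mem_insert_self i {j})
      have hfil : (Finset.univ.filter (fun c => y c ≠ 0))
          = insert e (Finset.univ.filter (fun c : Coords m => y' c ≠ 0)) := by
        ext c
        simp only [Finset.mem_filter, Finset.mem_univ, true_and, Finset.mem_insert]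
        by_cases hc : c = e
        · subst hc; simp [hy, hy'e]
        · simp [hy, Pi.single_apply, hc, Pi.add_apply]
      have henotin : e ∉ (Finset.univ.filter (fun c : Coords m => y' c ≠ 0)) := by
        simp [hy'e]
      have h1 : hammingNorm y = (Finset.univ.filter (fun c => y c ≠ 0)).card := rfl
      have h2' : hammingNorm y' = (Finset.univ.filter (fun c : Coords m => y' c ≠ 0)).card := rfl
      rw [h1, hfil, Finset.card_insert_of_notMem henotin, ← h2', hnorm']
      rcases hT with ⟨k, hk⟩; omega
    · intro c hc
      by_cases hce : c = e
      · subst hce; exact hsub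
      · have : y' c ≠ 0 := by
          intro h0
          apply hc
          simp [hy, Pi.single_apply, hce, h0]
        exact (hsupp' c this).trans (Finset.sdiff_subset)

lemma mem_Cm_iff_oddSet {x : Coords m → ZMod 2} : x ∈ Cm m ↔ oddSet x = ∅ := by
  rw [mem_Cm]
  constructor
  · intro h
    ext i; simp only [mem_oddSet, Finset.notMem_empty, iff_false]
    rw [h i]; decide
  · intro h i
    rcases zmod2_cases (deg x i) with h1 | h1
    · exact h1
    · exfalso
      have : i ∈ oddSet x := mem_oddSet.mpr h1
      rw [h] at this; exact absurd this (Finset.notMem_empty i)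

lemma oddSet_eq_of_mem_Cm {x c : Coords m → ZMod 2} (hc : c ∈ Cm m) :
    oddSet (x - c) = oddSet x := by
  rw [oddSet_sub, mem_Cm_iff_oddSet.mp hc]; simp

lemma exists_codeword (x : Coords m → ZMod 2) :
    ∃ c ∈ Cm m, hammingDist x c = (oddSet x).card / 2 := by
  obtain ⟨y, hodd, hnorm, -⟩ := exists_matching (oddSet x) (card_oddSet_even x)
  refine ⟨x - y, ?_, ?_⟩
  · rw [mem_Cm_iff_oddSet, oddSet_sub, hodd, symmDiff_self]
    rfl
  · rw [hammingDist_eq_hammingNorm', sub_sub_cancel, hnorm]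

lemma dist_ge {x c : Coords m → ZMod 2} (hc : c ∈ Cm m) :
    (oddSet x).card / 2 ≤ hammingDist x c := by
  have h1 : (oddSet x).card ≤ 2 * hammingNorm (x - c) := by
    rw [← oddSet_eq_of_mem_Cm (x := x) hc]
    exact card_oddSet_le _
  rw [hammingDist_eq_hammingNorm']
  omega

lemma distToCode_Cm (x : Coords m → ZMod 2) :
    distToCode (Cm m : Set (Coords m → ZMod 2)) x = (oddSet x).card / 2 := by
  obtain ⟨c, hc, hd⟩ := exists_codeword x
  unfold distToCode
  apply le_antisymm
  · exact Nat.sInf_le ⟨c, hc, hd⟩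
  · have hne : {d | ∃ c ∈ (Cm m : Set (Coords m → ZMod 2)), hammingDist x c = d}.Nonempty :=
      ⟨_, c, hc, hd⟩
    obtain ⟨c', hc', hd'⟩ := Nat.sInf_mem hne
    rw [← hd']
    exact dist_ge hc'

noncomputable def Hlin (m : ℕ) : (Coords m → ZMod 2) →ₗ[ZMod 2] (Fin m → ZMod 2) :=
  Matrix.mulVecLin (Matrix.of fun i c => Hmat m i c)

lemma Hlin_apply (x : Coords m → ZMod 2) : Hlin m x = deg x := by
  funext i
  simp [Hlin, Matrix.mulVecLin_apply, Matrix.mulVec, dotProduct, deg]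

lemma Cm_eq_ker : Cm m = LinearMap.ker (Hlin m) := rfl

def sumL (m : ℕ) : (Fin m → ZMod 2) →ₗ[ZMod 2] ZMod 2 where
  toFun v := ∑ i, v i
  map_add' := by intros; simp [Finset.sum_add_distrib]
  map_smul' := by intros; simp [Finset.mul_sum]

lemma card_cast_eq_sum (v : Fin m → ZMod 2) :
    ∑ i, v i = ((Finset.univ.filter (fun i => v i = 1)).card : ZMod 2) := by
  rw [Finset.card_eq_sum_ones, Nat.cast_sum]
  rw [← Finset.sum_filter_add_sum_filter_not Finset.univ (fun i => v i = 1)]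
  have h2 : ∑ i ∈ Finset.univ.filter (fun i => ¬ v i = 1), v i = 0 :=
    Finset.sum_eq_zero fun i hi => by
      simp only [Finset.mem_filter] at hi
      rcases zmod2_cases (v i) with h | h
      · exact h
      · exact absurd h hi.2
  have h1 : ∑ i ∈ Finset.univ.filter (fun i => v i = 1), v i
      = ∑ i ∈ Finset.univ.filter (fun i => v i = 1), (1 : ZMod 2) :=
    Finset.sum_congr rfl fun i hi => (Finset.mem_filter.mp hi).2
  rw [h1, h2, add_zero]; simp

lemma range_Hlin : LinearMap.range (Hlin m) = LinearMap.ker (sumL m) := by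
  apply le_antisymm
  · rintro v ⟨x, rfl⟩
    simp only [LinearMap.mem_ker, sumL, LinearMap.coe_mk, AddHom.coe_mk, Hlin_apply]
    exact sum_deg x
  · intro v hv
    simp only [LinearMap.mem_ker, sumL, LinearMap.coe_mk, AddHom.coe_mk] at hv
    set T : Finset (Fin m) := Finset.univ.filter (fun i => v i = 1) with hT
    have hcard : ((T.card : ZMod 2)) = 0 := by rw [← card_cast_eq_sum, hv]
    have heven : Even T.card :=
      even_iff_two_dvd.mpr ((ZMod.natCast_eq_zero_iff _ 2).mp hcard)
    obtain ⟨y, hodd, -, -⟩ := exists_matching T heven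
    refine ⟨y, ?_⟩
    rw [Hlin_apply]
    funext i
    rcases zmod2_cases (deg y i) with h | h <;> rcases zmod2_cases (v i) with h' | h'
    · rw [h, h']
    · exfalso
      have : i ∈ T := by rw [hT]; simp [h']
      rw [← hodd, mem_oddSet] at this
      rw [this] at h; exact absurd h (by decide)
    · exfalso
      have : i ∈ oddSet y := mem_oddSet.mpr h
      rw [hodd, hT] at this
      simp only [Finset.mem_filter] at this
      rw [this.2] at h'; exact absurd h' (by decide)
    · rw [h, h']

lemma finrank_ker_sumL (hm : 1 ≤ m) :
    Module.finrank (ZMod 2) (LinearMap.ker (sumL m)) = m - 1 := by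
  have hsurj : LinearMap.range (sumL m) = ⊤ := by
    rw [LinearMap.range_eq_top]
    intro a
    refine ⟨Pi.single ⟨0, hm⟩ a, ?_⟩
    simp [sumL, Finset.sum_pi_single']
  have hrn := LinearMap.finrank_range_add_finrank_ker (sumL m)
  rw [hsurj, finrank_top, Module.finrank_self, Module.finrank_fintype_fun_eq_card,
    Fintype.card_fin] at hrn
  omega

lemma finrank_Cm (hm : 1 ≤ m) :
    Module.finrank (ZMod 2) (Cm m) + (m - 1) = Fintype.card (Coords m) := by
  have hrn := LinearMap.finrank_range_add_finrank_ker (Hlin m)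
  rw [range_Hlin, finrank_ker_sumL hm, Module.finrank_fintype_fun_eq_card, ← Cm_eq_ker] at hrn
  omega

lemma card_oddSet_le_m (x : Coords m → ZMod 2) : (oddSet x).card ≤ m := by
  simpa using Finset.card_le_univ (oddSet x)

lemma oddSet_univ_iff (he : m % 2 = 0) (x : Coords m → ZMod 2) :
    distToCode (Cm m : Set (Coords m → ZMod 2)) x = m / 2 ↔ oddSet x = Finset.univ := by
  rw [distToCode_Cm]
  constructor
  · intro h
    have h1 := card_oddSet_le_m x
    have h2 := card_oddSet_even x
    rw [Nat.even_iff] at h2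
    have : (oddSet x).card = m := by omega
    apply Finset.eq_univ_of_card
    simpa using this
  · intro h
    rw [h]
    simp

section main
variable {y₀ : Coords m → ZMod 2} (h0 : oddSet y₀ = Finset.univ)
include h0

lemma mem_A_iff (x : Coords m → ZMod 2) :
    x ∈ Cm m ⊔ Submodule.span (ZMod 2) {y₀} ↔
      oddSet x = ∅ ∨ oddSet x = Finset.univ := by
  rw [Submodule.mem_sup]
  constructor
  · rintro ⟨c, hc, z, hz, rfl⟩
    obtain ⟨a, rfl⟩ := Submodule.mem_span_singleton.mp hz
    rcases zmod2_cases a with ha | ha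
    · left
      rw [ha, zero_smul, add_zero]
      exact mem_Cm_iff_oddSet.mp hc
    · right
      rw [ha, one_smul, oddSet_add, mem_Cm_iff_oddSet.mp hc, h0]
      simp
  · rintro (h | h)
    · exact ⟨x, mem_Cm_iff_oddSet.mpr h, 0, Submodule.zero_mem _, add_zero x⟩
    · refine ⟨x - y₀, ?_, y₀, Submodule.mem_span_singleton_self _, sub_add_cancel x y₀⟩
      rw [mem_Cm_iff_oddSet, oddSet_sub, h, h0, symmDiff_self]
      rfl

lemma setEq (he : m % 2 = 0) :
    ((Cm m ⊔ Submodule.span (ZMod 2) {y₀} : Submodule (ZMod 2) (Coords m → ZMod 2)) :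
        Set (Coords m → ZMod 2)) =
      (Cm m : Set (Coords m → ZMod 2)) ∪ Cset (Cm m : Set (Coords m → ZMod 2)) (m / 2) := by
  ext x
  rw [Set.mem_union, SetLike.mem_coe, mem_A_iff h0]
  constructor
  · rintro (h | h)
    · exact Or.inl (mem_Cm_iff_oddSet.mpr h)
    · exact Or.inr ((oddSet_univ_iff he x).mpr h)
  · rintro (h | h)
    · exact Or.inl (mem_Cm_iff_oddSet.mp h)
    · exact Or.inr ((oddSet_univ_iff he x).mp h)

lemma y0_ne_zero (hm : 1 ≤ m) : y₀ ≠ 0 := by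
  intro h
  have hz : oddSet (0 : Coords m → ZMod 2) = ∅ := by
    ext i; simp [mem_oddSet, deg]
  rw [h, hz] at h0
  have h1 : (⟨0, hm⟩ : Fin m) ∈ (Finset.univ : Finset (Fin m)) := Finset.mem_univ _
  rw [← h0] at h1
  simp at h1

lemma finrank_A (hm : 1 ≤ m) :
    Module.finrank (ZMod 2) (Cm m ⊔ Submodule.span (ZMod 2) {y₀} :
      Submodule (ZMod 2) (Coords m → ZMod 2)) + (m - 1) =
    Fintype.card (Coords m) + 1 := by
  have hinf : Cm m ⊓ Submodule.span (ZMod 2) {y₀} = ⊥ := by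
    rw [Submodule.eq_bot_iff]
    rintro z ⟨hz1, hz2⟩
    obtain ⟨a, rfl⟩ := Submodule.mem_span_singleton.mp hz2
    rcases zmod2_cases a with ha | ha
    · rw [ha, zero_smul]
    · exfalso
      rw [ha, one_smul] at hz1
      have h2 := mem_Cm_iff_oddSet.mp hz1
      rw [h0] at h2
      have h1 : (⟨0, hm⟩ : Fin m) ∈ (Finset.univ : Finset (Fin m)) := Finset.mem_univ _
      rw [h2] at h1
      simp at h1
  have hsum := Submodule.finrank_sup_add_finrank_inf_eq (Cm m)
    (Submodule.span (ZMod 2) {y₀})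
  rw [hinf, finrank_span_singleton (y0_ne_zero h0 hm)] at hsum
  have hC := finrank_Cm (m := m) hm
  have hbot : Module.finrank (ZMod 2) (⊥ : Submodule (ZMod 2) (Coords m → ZMod 2)) = 0 :=
    finrank_bot _ _
  rw [hbot] at hsum
  omega

omit h0 in
lemma half_card_le_norm (y : Coords m → ZMod 2) : (oddSet y).card / 2 ≤ hammingNorm y := by
  have := card_oddSet_le y; omega

lemma distToCode_A (he : m % 2 = 0) (x : Coords m → ZMod 2) :
    distToCode ((Cm m ⊔ Submodule.span (ZMod 2) {y₀} :
        Submodule (ZMod 2) (Coords m → ZMod 2)) : Set (Coords m → ZMod 2)) x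
      = min ((oddSet x).card / 2) ((m - (oddSet x).card) / 2) := by
  set A := Cm m ⊔ Submodule.span (ZMod 2) {y₀} with hA
  set t := (oddSet x).card with ht
  have hlb : ∀ z ∈ (A : Set (Coords m → ZMod 2)),
      min (t / 2) ((m - t) / 2) ≤ hammingDist x z := by
    intro z hz
    rcases (mem_A_iff h0 z).mp hz with hodd | hodd
    · exact le_trans (min_le_left _ _) (dist_ge (mem_Cm_iff_oddSet.mpr hodd))
    · refine le_trans (min_le_right _ _) ?_
      have hxz : oddSet (x - z) = (oddSet x)ᶜ := by
        rw [oddSet_sub, hodd, ← Finset.top_eq_univ, symmDiff_top, hnot_eq_compl]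
      have hcard : (oddSet (x - z)).card = m - t := by
        rw [hxz, Finset.card_compl, Fintype.card_fin]
      rw [hammingDist_eq_hammingNorm']
      calc (m - t) / 2 = (oddSet (x - z)).card / 2 := by rw [hcard]
        _ ≤ _ := half_card_le_norm _
  obtain ⟨c1, hc1, hd1⟩ := exists_codeword x
  have hc1A : c1 ∈ (A : Set (Coords m → ZMod 2)) := Submodule.mem_sup_left hc1
  have heven : Even (m - t) := by
    have h1 := card_oddSet_even x
    have h2 := card_oddSet_le_m x
    rw [Nat.even_iff] at h1 ⊢
    omega
  obtain ⟨y', hodd', hnorm', -⟩ := exists_matching (oddSet x)ᶜ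
    (by rwa [Finset.card_compl, Fintype.card_fin])
  set c2 := x - y' with hc2def
  have hc2A : c2 ∈ (A : Set (Coords m → ZMod 2)) := by
    rw [SetLike.mem_coe, mem_A_iff h0]
    right
    rw [hc2def, oddSet_sub, hodd']
    ext a
    simp [Finset.mem_symmDiff]
  have hd2 : hammingDist x c2 = (m - t) / 2 := by
    rw [hammingDist_eq_hammingNorm', hc2def, sub_sub_cancel, hnorm',
      Finset.card_compl, Fintype.card_fin]
  unfold distToCode
  apply le_antisymm
  · rcases le_total (t / 2) ((m - t) / 2) with h | h
    · rw [min_eq_left h]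
      exact Nat.sInf_le ⟨c1, hc1A, hd1⟩
    · rw [min_eq_right h]
      exact Nat.sInf_le ⟨c2, hc2A, hd2⟩
  · obtain ⟨z, hz, hdz⟩ := Nat.sInf_mem
      (⟨_, c1, hc1A, hd1⟩ : {d | ∃ c ∈ (A : Set (Coords m → ZMod 2)), hammingDist x c = d}.Nonempty)
    rw [← hdz]
    exact hlb z hz

lemma covRad_A (hm : 6 ≤ m) (he : m % 2 = 0) :
    covRad ((Cm m ⊔ Submodule.span (ZMod 2) {y₀} :
        Submodule (ZMod 2) (Coords m → ZMod 2)) : Set (Coords m → ZMod 2)) = m / 4 := by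
  unfold covRad
  apply IsGreatest.csSup_eq
  constructor
  · obtain ⟨T₀, -, hT₀⟩ := Finset.exists_subset_card_eq (s := (Finset.univ : Finset (Fin m)))
      (n := 2 * (m / 4)) (by simp; omega)
    obtain ⟨y, hodd, -, -⟩ := exists_matching T₀ (by rw [hT₀]; exact even_two_mul _)
    refine ⟨y, ?_⟩
    rw [distToCode_A h0 he, hodd, hT₀]
    rcases le_total (2 * (m / 4) / 2) ((m - 2 * (m / 4)) / 2) with h | h
    · rw [min_eq_left h]; omega
    · rw [min_eq_right h]; omega
  · rintro d ⟨x, rfl⟩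
    rw [distToCode_A h0 he]
    have h1 := card_oddSet_le_m x
    rcases le_total ((oddSet x).card / 2) ((m - (oddSet x).card) / 2) with h | h
    · rw [min_eq_left h]; omega
    · rw [min_eq_right h]; omega

end main

lemma deg_eq_card_filter (x : Coords m → ZMod 2) (v : Fin m) :
    deg x v = (((Finset.univ.filter (fun c : Coords m => v ∈ c.1 ∧ x c ≠ 0))).card : ZMod 2) := by
  rw [deg, Finset.card_eq_sum_ones, Nat.cast_sum,
    ← Finset.sum_filter_add_sum_filter_not Finset.univ (fun c : Coords m => v ∈ c.1 ∧ x c ≠ 0)]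
  have h2 : ∑ c ∈ Finset.univ.filter (fun c : Coords m => ¬ (v ∈ c.1 ∧ x c ≠ 0)),
      Hmat m v c * x c = 0 := by
    refine Finset.sum_eq_zero fun c hc => ?_
    simp only [Finset.mem_filter, not_and, not_not] at hc
    by_cases hv : v ∈ c.1
    · rw [hc.2 hv, mul_zero]
    · simp [Hmat, hv]
  have h1 : ∑ c ∈ Finset.univ.filter (fun c : Coords m => v ∈ c.1 ∧ x c ≠ 0),
      Hmat m v c * x c
      = ∑ c ∈ Finset.univ.filter (fun c : Coords m => v ∈ c.1 ∧ x c ≠ 0), (1 : ZMod 2) := by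
    refine Finset.sum_congr rfl fun c hc => ?_
    simp only [Finset.mem_filter] at hc
    rw [zmod2_ne_zero.mp hc.2.2]
    simp [Hmat, hc.2.1]
  rw [h1, h2, add_zero]
  simp

lemma three_le_norm_Cm {x : Coords m → ZMod 2} (hx : x ∈ Cm m) (hne : x ≠ 0) :
    3 ≤ hammingNorm x := by
  obtain ⟨e, he⟩ : ∃ e, x e ≠ 0 := by
    by_contra hcon
    push_neg at hcon
    exact hne (funext fun c => hcon c)
  obtain ⟨i, j, hij, hije⟩ := Finset.card_eq_two.mp e.2
  set E : Fin m → Finset (Coords m) :=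
    fun v => Finset.univ.filter (fun c : Coords m => v ∈ c.1 ∧ x c ≠ 0) with hE
  have hEcard : ∀ v, Even (E v).card := by
    intro v
    have hd := mem_Cm.mp hx v
    rw [deg_eq_card_filter] at hd
    exact even_iff_two_dvd.mpr ((ZMod.natCast_eq_zero_iff _ 2).mp hd)
  have heE : ∀ v, v ∈ e.1 → e ∈ E v :=
    fun v hv => Finset.mem_filter.mpr ⟨Finset.mem_univ _, hv, he⟩
  have hi2 : 2 ≤ (E i).card := by
    have h1 : 0 < (E i).card := Finset.card_pos.mpr
      ⟨e, heE i (by rw [hije]; exact Finset.mem_insert_self _ _)⟩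
    have h2 := hEcard i
    rw [Nat.even_iff] at h2
    omega
  have hj2 : 2 ≤ (E j).card := by
    have h1 : 0 < (E j).card := Finset.card_pos.mpr
      ⟨e, heE j (by rw [hije]; simp)⟩
    have h2 := hEcard j
    rw [Nat.even_iff] at h2
    omega
  have hinter : E i ∩ E j ⊆ {e} := by
    intro c hc
    rw [Finset.mem_inter, hE] at hc
    simp only [Finset.mem_filter, Finset.mem_univ, true_and] at hc
    have hsub : ({i, j} : Finset (Fin m)) ⊆ c.1 := by
      intro a ha
      rcases Finset.mem_insert.mp ha with h | h
      · exact h ▸ hc.1.1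
      · exact (Finset.mem_singleton.mp h) ▸ hc.2.1
    have hceq : c.1 = ({i, j} : Finset (Fin m)) :=
      (Finset.eq_of_subset_of_card_le hsub (by rw [c.2, Finset.card_pair hij])).symm
    rw [Finset.mem_singleton]
    exact Subtype.ext (by rw [hceq, hije])
  have hunion : E i ∪ E j ⊆ Finset.univ.filter (fun c : Coords m => x c ≠ 0) := by
    intro c hc
    rcases Finset.mem_union.mp hc with h | h <;>
      · rw [hE] at h
        simp only [Finset.mem_filter, Finset.mem_univ, true_and] at h
        exact Finset.mem_filter.mpr ⟨Finset.mem_univ _, h.2⟩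
  have h5 := Finset.card_union_add_card_inter (E i) (E j)
  have h6 : (E i ∩ E j).card ≤ 1 :=
    le_trans (Finset.card_le_card hinter) (by simp)
  have h7 : (E i ∪ E j).card ≤ hammingNorm x := Finset.card_le_card hunion
  omega

lemma triangle_exists (hm : 6 ≤ m) :
    ∃ x : Coords m → ZMod 2, x ∈ Cm m ∧ x ≠ 0 ∧ hammingNorm x = 3 := by
  set v0 : Fin m := ⟨0, by omega⟩ with hv0
  set v1 : Fin m := ⟨1, by omega⟩ with hv1
  set v2 : Fin m := ⟨2, by omega⟩ with hv2
  have h01 : v0 ≠ v1 := by simp [hv0, hv1, Fin.ext_iff]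
  have h02 : v0 ≠ v2 := by simp [hv0, hv2, Fin.ext_iff]
  have h12 : v1 ≠ v2 := by simp [hv1, hv2, Fin.ext_iff]
  set e01 : Coords m := ⟨{v0, v1}, Finset.card_pair h01⟩ with he01
  set e02 : Coords m := ⟨{v0, v2}, Finset.card_pair h02⟩ with he02
  set e12 : Coords m := ⟨{v1, v2}, Finset.card_pair h12⟩ with he12
  have hd1 : e01 ≠ e02 := by
    intro h
    have : v1 ∈ ({v0, v2} : Finset (Fin m)) := by
      rw [← show e01.1 = ({v0,v2} : Finset (Fin m)) from congrArg Subtype.val h]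
      simp [he01]
    rcases Finset.mem_insert.mp this with h' | h'
    · exact h01 h'.symm
    · exact h12 (Finset.mem_singleton.mp h')
  have hd2 : e01 ≠ e12 := by
    intro h
    have : v0 ∈ ({v1, v2} : Finset (Fin m)) := by
      rw [← show e01.1 = ({v1,v2} : Finset (Fin m)) from congrArg Subtype.val h]
      simp [he01]
    rcases Finset.mem_insert.mp this with h' | h'
    · exact h01 h'
    · exact h02 (Finset.mem_singleton.mp h')
  have hd3 : e02 ≠ e12 := by
    intro h
    have : v0 ∈ ({v1, v2} : Finset (Fin m)) := by
      rw [← show e02.1 = ({v1,v2} : Finset (Fin m)) from congrArg Subtype.val h]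
      simp [he02]
    rcases Finset.mem_insert.mp this with h' | h'
    · exact h01 h'
    · exact h02 (Finset.mem_singleton.mp h')
  set x : Coords m → ZMod 2 :=
    Pi.single e01 1 + Pi.single e02 1 + Pi.single e12 1 with hx
  have hnorm : hammingNorm x = 3 := by
    have hfil : (Finset.univ.filter (fun c : Coords m => x c ≠ 0))
        = {e01, e02, e12} := by
      ext c
      simp only [Finset.mem_filter, Finset.mem_univ, true_and, Finset.mem_insert,
        Finset.mem_singleton]
      rw [hx]
      by_cases hc1 : c = e01
      · subst hc1
        simp [Pi.single_apply, hd1, hd2]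
      · by_cases hc2 : c = e02
        · subst hc2
          simp [Pi.single_apply, Ne.symm hd1, hd3]
        · by_cases hc3 : c = e12
          · subst hc3
            simp [Pi.single_apply, Ne.symm hd2, Ne.symm hd3]
          · simp [Pi.single_apply, hc1, hc2, hc3]
    have : hammingNorm x = (Finset.univ.filter (fun c : Coords m => x c ≠ 0)).card := rfl
    rw [this, hfil]
    rw [Finset.card_insert_of_notMem (by simp [hd1, hd2]),
      Finset.card_insert_of_notMem (by simp [hd3]), Finset.card_singleton]
  refine ⟨x, ?_, ?_, hnorm⟩
  · rw [mem_Cm_iff_oddSet, hx, oddSet_add, oddSet_add, oddSet_single, oddSet_single,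
      oddSet_single, he01, he02, he12]
    ext a
    simp only [Finset.mem_symmDiff, Finset.mem_insert, Finset.mem_singleton,
      Finset.notMem_empty, iff_false]
    have h10 : ¬ v1 = v0 := fun h => h01 h.symm
    have h20 : ¬ v2 = v0 := fun h => h02 h.symm
    have h21 : ¬ v2 = v1 := fun h => h12 h.symm
    by_cases ha0 : a = v0 <;> by_cases ha1 : a = v1 <;> by_cases ha2 : a = v2 <;>
      simp_all
  · intro h
    rw [h] at hnorm
    simp [hammingNorm] at hnorm

/-- for even m ≥ 6, C^[m] = C^(m) ∪ C^(m)(ρ) (with ρ = m/2) is a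
binary linear code of length m(m-1)/2, dimension n - m + 2, minimum distance 3
and covering radius ⌊m/4⌋. -/
theorem stmt_13 (m : ℕ) (hm : 6 ≤ m) (he : Even m) :
    ∃ A : Submodule (ZMod 2) (Coords m → ZMod 2),
      (A : Set (Coords m → ZMod 2)) =
        (Cm m : Set (Coords m → ZMod 2)) ∪ Cset (Cm m : Set (Coords m → ZMod 2)) (m / 2) ∧
      Fintype.card (Coords m) = m * (m - 1) / 2 ∧
      Module.finrank (ZMod 2) A = m * (m - 1) / 2 - m + 2 ∧
      IsLeast {w | ∃ x ∈ A, x ≠ 0 ∧ hammingNorm x = w} 3 ∧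
      covRad (A : Set (Coords m → ZMod 2)) = m / 4 := by
  have he2 : m % 2 = 0 := Nat.even_iff.mp he
  obtain ⟨y₀, h0, -, -⟩ := exists_matching (Finset.univ : Finset (Fin m))
    (by rw [Finset.card_univ, Fintype.card_fin]; exact he)
  have hcard : Fintype.card (Coords m) = m * (m - 1) / 2 := by
    rw [Fintype.card_finset_len, Fintype.card_fin, Nat.choose_two_right]
  refine ⟨Cm m ⊔ Submodule.span (ZMod 2) {y₀}, setEq h0 he2, hcard, ?_, ?_,
    covRad_A h0 hm he2⟩
  · have h := finrank_A h0 (by omega)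
    rw [hcard] at h
    have hn : m ≤ m * (m - 1) / 2 := by
      have h2 : m * 2 ≤ m * (m - 1) := Nat.mul_le_mul_left m (by omega)
      calc m = m * 2 / 2 := by omega
        _ ≤ m * (m - 1) / 2 := Nat.div_le_div_right h2
    omega
  · constructor
    · obtain ⟨x, hxC, hx0, hxn⟩ := triangle_exists hm
      exact ⟨x, Submodule.mem_sup_left hxC, hx0, hxn⟩
    · rintro w ⟨x, hxA, hx0, rfl⟩
      rcases (mem_A_iff h0 x).mp hxA with hodd | hodd
      · exact three_le_norm_Cm (mem_Cm_iff_oddSet.mpr hodd) hx0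
      · have h1 := card_oddSet_le x
        rw [hodd, Finset.card_univ, Fintype.card_fin] at h1
        omega
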